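/- arXiv:1611.06708 — 4 statements merged into one kernel-verified Lean document; each statement's English description precedes it below -/
import Mathlib

section
/- Let a, b, x be real numbers and Δ ∈ (0,1). If b ∈ (a − Δ², a + Δ²), 0 ∉ (a − Δ, a + Δ), and x ∉ (a − 2Δ, a + 2Δ), then |(1 − x/a) / (1 − x/b)| ≤ (1 + Δ)². -/
theorem stmt0 (a b x Δ : ℝ) (hΔ : Δ ∈ Set.Ioo (0:ℝ) 1)
    (hb : b ∈ Set.Ioo (a - Δ^2) (a + Δ^2))
    (h0 : (0:ℝ) ∉ Set.Ioo (a - Δ) (a + Δ))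
    (hx : x ∉ Set.Ioo (a - 2*Δ) (a + 2*Δ)) :
    |(1 - x/a) / (1 - x/b)| ≤ (1 + Δ)^2 := by
  obtain ⟨hΔ0, hΔ1⟩ := hΔ
  obtain ⟨hb1, hb2⟩ := hb
  simp only [Set.mem_Ioo, not_and, not_lt] at h0 hx
  have haa : Δ ≤ |a| := by
    rcases le_or_gt a 0 with h | h
    · rw [abs_of_nonpos h]
      have := h0 (by linarith)
      linarith
    · rw [abs_of_pos h]
      by_contra hcon
      push_neg at hcon
      have := h0 (by linarith)
      linarith
  have haxx : 2 * Δ ≤ |a - x| := by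
    rcases le_or_gt x (a - 2*Δ) with h | h
    · rw [abs_of_nonneg (by linarith)]; linarith
    · have hxge := hx h
      rw [abs_of_nonpos (by linarith)]; linarith
  have hba : |b - a| ≤ Δ^2 := abs_le.mpr ⟨by linarith, by linarith⟩
  have habs1 : |a| - |b| ≤ |b - a| := by
    rw [abs_sub_comm]; exact abs_sub_abs_le_abs_sub a b
  have hbabs : Δ - Δ^2 ≤ |b| := by linarith
  have hbpos : 0 < |b| := by nlinarith
  have habsub : |b| ≤ |a| + Δ^2 := by
    have := abs_sub_abs_le_abs_sub b a
    linarith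
  have hbx : |a - x| - Δ^2 ≤ |b - x| := by
    have h1 : |a - x| - |b - x| ≤ |(a - x) - (b - x)| := abs_sub_abs_le_abs_sub _ _
    have h2 : |(a - x) - (b - x)| = |b - a| := by rw [abs_sub_comm]; ring_nf
    linarith
  have hbxpos : 0 < |b - x| := by nlinarith
  have ha0 : a ≠ 0 := by
    intro h; rw [h, abs_zero] at haa; linarith
  have hb0 : b ≠ 0 := abs_pos.mp hbpos
  have hbx0 : b - x ≠ 0 := abs_pos.mp hbxpos
  have key : (1 - x/a) / (1 - x/b) = (b * (a - x)) / (a * (b - x)) := by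
    field_simp
  rw [key, abs_div, abs_mul, abs_mul]
  rw [div_le_iff₀ (by positivity)]
  have hapos : 0 < |a| := by linarith
  set A := |a|
  set B := |b|
  set T := |a - x|
  set S := |b - x|
  have hT0 : (0:ℝ) ≤ T := abs_nonneg _
  have step1 : B * T ≤ (A + Δ^2) * T :=
    mul_le_mul_of_nonneg_right habsub hT0
  have step2 : (1+Δ)^2 * A * (T - Δ^2) ≤ (1+Δ)^2 * (A * S) := by
    rw [mul_assoc]
    exact mul_le_mul_of_nonneg_left (by nlinarith) (by positivity)
  have step3 : (A + Δ^2) * T ≤ (1+Δ)^2 * A * (T - Δ^2) := by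
    nlinarith [mul_nonneg (mul_nonneg hΔ0.le hT0) (sub_nonneg.mpr haa),
      mul_nonneg (mul_nonneg hΔ0.le hapos.le) (by linarith : (0:ℝ) ≤ T - 2*Δ),
      mul_nonneg (mul_nonneg (sq_nonneg Δ) hapos.le) (by linarith : (0:ℝ) ≤ T - 2*Δ),
      mul_nonneg (mul_nonneg (sq_nonneg Δ) hapos.le)
        (by nlinarith : (0:ℝ) ≤ 1 - Δ^2)]
  linarith
end

section
/- Let ε ∈ (0, 1/(2e)), C > 0, and let f : ℂ → ℂ be entire with |f(z)| ≤ C·e^{ε|z|} for all z ∈ ℂ. If λ ∈ ℂ satisfies f(λ) = 0, then the entire function g(z) = f(z)/(z − λ) (extended by g(λ) = f′(λ)) satisfies |g(z)| ≤ C·e^{ε|z|} for all z ∈ ℂ. -/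
theorem stmt2 (ε C : ℝ) (hε : ε ∈ Set.Ioo (0:ℝ) (1/(2*Real.exp 1))) (hC : 0 < C)
    (f : ℂ → ℂ) (hf : Differentiable ℂ f)
    (hbd : ∀ z : ℂ, ‖f z‖ ≤ C * Real.exp (ε * ‖z‖))
    (l : ℂ) (hl : f l = 0)
    (g : ℂ → ℂ) (hg1 : ∀ z : ℂ, z ≠ l → g z = f z / (z - l))
    (hg2 : g l = deriv f l) :
    ∀ z : ℂ, ‖g z‖ ≤ C * Real.exp (ε * ‖z‖) := by
  obtain ⟨hε0, hεlt⟩ := hε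
  have he : (0:ℝ) < Real.exp 1 := Real.exp_pos 1
  have h2εe : 2 * ε * Real.exp 1 < 1 := by
    rw [lt_div_iff₀ (by positivity)] at hεlt
    nlinarith
  have h2ε1 : 2 * ε < 1 := by nlinarith [Real.add_one_le_exp 1]
  set R : ℝ := 1 / (2 * ε) with hRdef
  have hR0 : 0 < R := by positivity
  have hεR : ε * R = 1 / 2 := by rw [hRdef]; field_simp
  -- g is entire
  have hgeq : g = dslope f l := by
    funext w
    by_cases hw : w = l
    · subst hw; simp [hg2]
    · rw [hg1 w hw, dslope_of_ne f hw, slope_def_field, hl, sub_zero]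
  have hgd : Differentiable ℂ g := by
    rw [hgeq, ← differentiableOn_univ]
    exact (Complex.differentiableOn_dslope (by simp)).mpr hf.differentiableOn
  -- key estimate away from l
  have key : ∀ w : ℂ, R ≤ ‖w - l‖ →
      ‖g w‖ ≤ 2 * ε * (C * Real.exp (ε * ‖w‖)) := by
    intro w hw
    have hwne : w ≠ l := by
      intro h; rw [h] at hw; simp at hw; linarith
    have hwl0 : (0:ℝ) < ‖w - l‖ := lt_of_lt_of_le hR0 hw
    rw [hg1 w hwne, norm_div]
    rw [div_le_iff₀ hwl0]
    calc ‖f w‖ ≤ C * Real.exp (ε * ‖w‖) := hbd w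
      _ = 2 * ε * (C * Real.exp (ε * ‖w‖)) * R := by
          rw [hRdef]; field_simp
      _ ≤ 2 * ε * (C * Real.exp (ε * ‖w‖)) * ‖w - l‖ := by
          apply mul_le_mul_of_nonneg_left hw; positivity
  intro z
  by_cases hz : R ≤ ‖z - l‖
  · calc ‖g z‖ ≤ 2 * ε * (C * Real.exp (ε * ‖z‖)) := key z hz
      _ ≤ 1 * (C * Real.exp (ε * ‖z‖)) := by
          apply mul_le_mul_of_nonneg_right (le_of_lt h2ε1); positivity
      _ = C * Real.exp (ε * ‖z‖) := one_mul _
  · push_neg at hz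
    -- maximum modulus on the ball of radius R around l
    have hfr : ∀ w ∈ frontier (Metric.ball l R), ‖g w‖ ≤ C * Real.exp (ε * ‖z‖) := by
      intro w hw
      rw [frontier_ball l (ne_of_gt hR0)] at hw
      have hwl : ‖w - l‖ = R := by
        simpa [Complex.dist_eq] using hw
      have h1 : ‖g w‖ ≤ 2 * ε * (C * Real.exp (ε * ‖w‖)) :=
        key w (le_of_eq hwl.symm)
      have hwb : ‖w‖ ≤ ‖z‖ + 2 * R := by
        have t1 : ‖w‖ ≤ ‖w - l‖ + ‖l‖ := by
          simpa using norm_add_le (w - l) l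
        have t2 : ‖l‖ ≤ ‖z‖ + ‖z - l‖ := by
          calc ‖l‖ ≤ ‖l - z‖ + ‖z‖ := by
                simpa using norm_add_le (l - z) z
            _ = ‖z‖ + ‖z - l‖ := by
                rw [norm_sub_rev l z]; ring
        calc ‖w‖ ≤ ‖w - l‖ + ‖l‖ := t1
          _ ≤ R + (‖z‖ + ‖z - l‖) := by
              rw [hwl]; linarith
          _ ≤ ‖z‖ + 2 * R := by linarith
      have hexp : Real.exp (ε * ‖w‖) ≤ Real.exp (ε * ‖z‖) * Real.exp 1 := by
        rw [← Real.exp_add]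
        apply Real.exp_le_exp.mpr
        have : ε * ‖w‖ ≤ ε * (‖z‖ + 2 * R) :=
          mul_le_mul_of_nonneg_left hwb (le_of_lt hε0)
        calc ε * ‖w‖ ≤ ε * ‖z‖ + 2 * (ε * R) := by linarith [this]
          _ = ε * ‖z‖ + 1 := by rw [hεR]; ring
      calc ‖g w‖ = ‖g w‖ := rfl
        _ ≤ 2 * ε * (C * Real.exp (ε * ‖w‖)) := h1
        _ ≤ 2 * ε * (C * (Real.exp (ε * ‖z‖) * Real.exp 1)) := by
            apply mul_le_mul_of_nonneg_left _ (by positivity)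
            exact mul_le_mul_of_nonneg_left hexp (le_of_lt hC)
        _ = (2 * ε * Real.exp 1) * (C * Real.exp (ε * ‖z‖)) := by ring
        _ ≤ 1 * (C * Real.exp (ε * ‖z‖)) := by
            apply mul_le_mul_of_nonneg_right (le_of_lt h2εe); positivity
        _ = C * Real.exp (ε * ‖z‖) := one_mul _
    have hcl : z ∈ closure (Metric.ball l R) :=
      subset_closure (by simpa [Metric.mem_ball, Complex.dist_eq] using hz)
    exact Complex.norm_le_of_forall_mem_frontier_norm_le Metric.isBounded_ball
      hgd.diffContOnCl hfr hcl
end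

section
/- ∫_{-1}^{1} exp(−1/(1 − t²)) dt = (2/e) · ∫_{0}^{∞} e^{−t} √(t/(t+1)) dt. -/
open MeasureTheory Set Filter Real

noncomputable def gfun (s : ℝ) : ℝ := Real.sqrt (s / (s + 1))
noncomputable def gdfun (s : ℝ) : ℝ := 1 / (2 * Real.sqrt s * ((s + 1) * Real.sqrt (s + 1)))

lemma gfun_deriv {s : ℝ} (hs : 0 < s) : HasDerivAt gfun (gdfun s) s := by
  have hs1 : (0:ℝ) < s + 1 := by linarith
  have hr : HasDerivAt (fun s : ℝ => s / (s + 1)) (1 / (s + 1) ^ 2) s := by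
    have := (hasDerivAt_id s).div ((hasDerivAt_id s).add_const 1) (by positivity)
    refine this.congr_deriv ?_
    simp only [id]
    field_simp
    ring
  have hrs : s / (s + 1) ≠ 0 := by positivity
  have h := (Real.hasDerivAt_sqrt hrs).comp s hr
  refine h.congr_deriv ?_
  symm
  unfold gdfun
  rw [show s / (s + 1) = s * (s+1)⁻¹ by ring, Real.sqrt_mul hs.le,
    Real.sqrt_inv]
  have h1 : Real.sqrt s ≠ 0 := by positivity
  have h2 : Real.sqrt (s+1) ≠ 0 := by positivity
  have h3 : Real.sqrt (s+1) * Real.sqrt (s+1) = s + 1 :=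
    Real.mul_self_sqrt hs1.le
  field_simp
  have h4 : Real.sqrt (1 + s) ^ 2 = 1 + s := by
    rw [sq]; rw [add_comm] at h3; exact h3
  ring_nf
  rw [h4]

lemma gfun_le_one {s : ℝ} (h : 0 ≤ s) : gfun s ≤ 1 := by
  unfold gfun
  have h2 : (0:ℝ) < s + 1 := by linarith
  calc Real.sqrt (s/(s+1)) ≤ Real.sqrt 1 :=
        Real.sqrt_le_sqrt ((div_le_one h2).mpr (by linarith))
  _ = 1 := Real.sqrt_one

lemma gfun_nonneg (s : ℝ) : 0 ≤ gfun s := Real.sqrt_nonneg _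

lemma gfun_meas : Measurable gfun :=
  (measurable_id.div (measurable_id.add_const 1)).sqrt

lemma gdfun_meas : Measurable gdfun := by
  apply Measurable.div measurable_const
  exact (measurable_const.mul Real.continuous_sqrt.measurable).mul
    ((measurable_id.add_const 1).mul (measurable_id.add_const 1).sqrt)

lemma ibp_step :
    ∫ s in Set.Ioi (0:ℝ), Real.exp (-s) * Real.sqrt (s/(s+1))
      = ∫ s in Set.Ioi (0:ℝ), Real.exp (-s) * gdfun s := by
  have hu : ∀ x ∈ Set.Ioi (0:ℝ), HasDerivAt gfun (gdfun x) x := fun x hx => gfun_deriv hx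
  have hv : ∀ x ∈ Set.Ioi (0:ℝ),
      HasDerivAt (fun s : ℝ => -Real.exp (-s)) (Real.exp (-x)) x := by
    intro x _
    have h := ((Real.hasDerivAt_exp (-x)).comp x (hasDerivAt_neg x)).neg
    refine h.congr_deriv ?_
    simp
  have hexp_int : IntegrableOn (fun x : ℝ => Real.exp (-(1:ℝ) * x)) (Set.Ioi 0) :=
    exp_neg_integrableOn_Ioi 0 one_pos
  have huv' : IntegrableOn (gfun * fun s : ℝ => Real.exp (-s)) (Set.Ioi 0) := by
    apply Integrable.mono' hexp_int
    · exact (gfun_meas.mul (measurable_id.neg.exp)).aestronglyMeasurable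
    · filter_upwards [ae_restrict_mem measurableSet_Ioi] with x _
      rename_i hxmem
      rw [Pi.mul_apply, Real.norm_eq_abs, abs_mul, abs_of_nonneg (gfun_nonneg x),
        abs_of_pos (Real.exp_pos _), neg_one_mul]
      calc gfun x * Real.exp (-x) ≤ 1 * Real.exp (-x) :=
            mul_le_mul_of_nonneg_right (gfun_le_one (le_of_lt hxmem)) (Real.exp_pos _).le
      _ = Real.exp (-x) := one_mul _
  have hu'v : IntegrableOn (gdfun * fun s : ℝ => -Real.exp (-s)) (Set.Ioi 0) := by
    apply Integrable.mono' (Real.GammaIntegral_convergent (by norm_num : (0:ℝ) < 1/2))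
    · exact (gdfun_meas.mul (measurable_id.neg.exp.neg)).aestronglyMeasurable
    · filter_upwards [ae_restrict_mem measurableSet_Ioi] with x hx
      have hx' : (0:ℝ) < x := hx
      have hsx : (0:ℝ) < Real.sqrt x := Real.sqrt_pos.mpr hx'
      have hsx1 : (1:ℝ) ≤ Real.sqrt (x+1) := by
        have := Real.sqrt_le_sqrt (show (1:ℝ) ≤ x + 1 by linarith)
        rwa [Real.sqrt_one] at this
      have hgd : gdfun x ≤ (Real.sqrt x)⁻¹ := by
        unfold gdfun
        rw [one_div]
        apply inv_anti₀ hsx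
        have h15 : (1:ℝ) ≤ (x+1) * Real.sqrt (x+1) := by nlinarith
        nlinarith
      have hrw : x ^ ((1:ℝ)/2 - 1) = (Real.sqrt x)⁻¹ := by
        rw [show (1:ℝ)/2 - 1 = -(1/2) by norm_num, Real.rpow_neg hx'.le,
          ← Real.sqrt_eq_rpow]
      rw [Pi.mul_apply, Real.norm_eq_abs, abs_mul, abs_neg, abs_of_pos (Real.exp_pos _),
        abs_of_nonneg]
      · rw [hrw, mul_comm (Real.exp (-x))]
        exact mul_le_mul_of_nonneg_right hgd (Real.exp_pos _).le
      · unfold gdfun; positivity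
  have h_zero : Tendsto (gfun * fun s : ℝ => -Real.exp (-s)) (nhdsWithin 0 (Set.Ioi 0))
      (nhds 0) := by
    have hc : ContinuousAt (fun s : ℝ => gfun s * -Real.exp (-s)) 0 := by
      apply ContinuousAt.mul
      · exact (Real.continuous_sqrt.continuousAt).comp
          (ContinuousAt.div continuousAt_id (by fun_prop) (by norm_num))
      · fun_prop
    have h2 : Tendsto (fun s : ℝ => gfun s * -Real.exp (-s)) (nhdsWithin 0 (Set.Ioi 0))
        (nhds (gfun 0 * -Real.exp (-0))) := hc.continuousWithinAt
    have h3 : gfun 0 * -Real.exp (-0) = 0 := by simp [gfun]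
    rw [h3] at h2
    exact h2.congr (fun s => by simp [Pi.mul_apply])
  have h_infty : Tendsto (gfun * fun s : ℝ => -Real.exp (-s)) atTop (nhds 0) := by
    apply squeeze_zero_norm' ?_ Real.tendsto_exp_neg_atTop_nhds_zero
    filter_upwards [eventually_ge_atTop (0:ℝ)] with x hx0
    rw [Pi.mul_apply, Real.norm_eq_abs, abs_mul, abs_neg, abs_of_pos (Real.exp_pos _),
      abs_of_nonneg (gfun_nonneg x)]
    calc gfun x * Real.exp (-x) ≤ 1 * Real.exp (-x) :=
          mul_le_mul_of_nonneg_right (gfun_le_one hx0) (Real.exp_pos _).le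
    _ = Real.exp (-x) := one_mul _
  have key := MeasureTheory.integral_Ioi_mul_deriv_eq_deriv_mul hu hv huv' hu'v h_zero h_infty
  simp only [mul_neg, MeasureTheory.integral_neg, zero_sub, sub_neg_eq_add, zero_add,
    neg_neg, neg_zero] at key
  calc ∫ s in Set.Ioi (0:ℝ), Real.exp (-s) * Real.sqrt (s/(s+1))
      = ∫ s in Set.Ioi (0:ℝ), gfun s * Real.exp (-s) := by
        apply MeasureTheory.setIntegral_congr_fun measurableSet_Ioi
        intro x _; simp only [gfun]; ring
    _ = ∫ s in Set.Ioi (0:ℝ), gdfun s * Real.exp (-s) := key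
    _ = ∫ s in Set.Ioi (0:ℝ), Real.exp (-s) * gdfun s := by
        apply MeasureTheory.setIntegral_congr_fun measurableSet_Ioi
        intro x _; simp only []; ring

lemma subst_step :
    ∫ s in Set.Ioi (0:ℝ), Real.exp (-s) * gdfun s
      = Real.exp 1 * ∫ t in Set.Ioo (0:ℝ) 1, Real.exp (-1/(1 - t^2)) := by
  set φ : ℝ → ℝ := fun t => t^2/(1-t^2) with hφ
  have himg : φ '' Set.Ioo 0 1 = Set.Ioi (0:ℝ) := by
    ext y
    constructor
    · rintro ⟨t, ⟨ht0, ht1⟩, rfl⟩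
      have h1 : 0 < 1 - t^2 := by nlinarith
      exact div_pos (by positivity) h1
    · intro hy
      have hy' : (0:ℝ) < y := hy
      have hy1 : (0:ℝ) < y + 1 := by linarith
      refine ⟨Real.sqrt (y/(y+1)), ⟨?_, ?_⟩, ?_⟩
      · exact Real.sqrt_pos.mpr (div_pos hy' hy1)
      · rw [Real.sqrt_lt' one_pos]
        calc y/(y+1) < 1 := (div_lt_one hy1).mpr (by linarith)
        _ = 1^2 := by norm_num
      · have h1 : Real.sqrt (y/(y+1)) ^ 2 = y/(y+1) :=
          Real.sq_sqrt (by positivity)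
        simp only [hφ, h1]
        rw [show 1 - y/(y+1) = 1/(y+1) by field_simp; ring]
        field_simp
  have hderiv : ∀ t ∈ Set.Ioo (0:ℝ) 1,
      HasDerivWithinAt φ (2*t/(1-t^2)^2) (Set.Ioo 0 1) t := by
    intro t ⟨ht0, ht1⟩
    have hne : 1 - t^2 ≠ 0 := by nlinarith
    have h := (hasDerivAt_pow 2 t).div
      ((hasDerivAt_const t (1:ℝ)).sub (hasDerivAt_pow 2 t)) hne
    refine HasDerivAt.hasDerivWithinAt ?_
    refine h.congr_deriv ?_
    simp only [Pi.sub_apply, Nat.cast_ofNat]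
    field_simp
    ring
  have hinj : Set.InjOn φ (Set.Ioo 0 1) := by
    rintro a ⟨ha0, ha1⟩ b ⟨hb0, hb1⟩ hab
    have hna : (1:ℝ) - a^2 > 0 := by nlinarith
    have hnb : (1:ℝ) - b^2 > 0 := by nlinarith
    simp only [hφ] at hab
    rw [div_eq_div_iff (by positivity) (by positivity)] at hab
    have h2 : a^2 = b^2 := by nlinarith
    nlinarith [sq_nonneg (a - b), sq_nonneg (a + b)]
  rw [← himg, MeasureTheory.integral_image_eq_integral_abs_deriv_smul
    measurableSet_Ioo hderiv hinj, ← MeasureTheory.integral_const_mul]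
  apply MeasureTheory.setIntegral_congr_fun measurableSet_Ioo
  rintro t ⟨ht0, ht1⟩
  have hu : (0:ℝ) < 1 - t^2 := by nlinarith
  have hsu : (0:ℝ) < Real.sqrt (1 - t^2) := Real.sqrt_pos.mpr hu
  have hss : Real.sqrt (1-t^2) * Real.sqrt (1-t^2) = 1 - t^2 :=
    Real.mul_self_sqrt hu.le
  have h1 : Real.sqrt (φ t) = t / Real.sqrt (1-t^2) := by
    rw [hφ]
    rw [Real.sqrt_div' (t^2) ?_]
    · rw [Real.sqrt_sq ht0.le]
    · positivity
  have h2 : φ t + 1 = 1/(1-t^2) := by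
    simp only [hφ]; field_simp; ring
  have h3 : Real.sqrt (φ t + 1) = 1 / Real.sqrt (1-t^2) := by
    rw [h2, one_div, Real.sqrt_inv, one_div]
  have h4 : gdfun (φ t) = (1-t^2)^2 / (2*t) := by
    unfold gdfun
    rw [h3, h1, h2]
    rw [div_eq_div_iff ?_ (by positivity)]
    · field_simp
      nlinarith [hss]
    · positivity
  have h5 : Real.exp (-φ t) = Real.exp 1 * Real.exp (-1/(1-t^2)) := by
    rw [← Real.exp_add]
    congr 1
    simp only [hφ]
    field_simp
    ring
  have h6 : |2*t/(1-t^2)^2| = 2*t/(1-t^2)^2 := by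
    apply abs_of_pos; positivity
  simp only [smul_eq_mul]
  rw [h6, h4, h5]
  field_simp

lemma f_meas : AEStronglyMeasurable (fun t : ℝ => Real.exp (-1/(1 - t^2))) volume := by
  apply Measurable.aestronglyMeasurable
  exact (measurable_const.div ((measurable_const.sub (measurable_id.pow_const 2)))).exp

lemma f_intInt {a b : ℝ} (ha : a ∈ Set.Icc (-1:ℝ) 1) (hb : b ∈ Set.Icc (-1:ℝ) 1) :
    IntervalIntegrable (fun t : ℝ => Real.exp (-1/(1 - t^2))) volume a b := by
  rw [intervalIntegrable_iff]
  apply Measure.integrableOn_of_bounded (M := 1)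
  · exact (measure_Ioc_lt_top).ne
  · exact f_meas
  · filter_upwards [ae_restrict_mem measurableSet_uIoc] with t ht
    have h1 : -1 ≤ t := le_trans (le_min ha.1 hb.1) ht.1.le
    have h2 : t ≤ 1 := le_trans ht.2 (max_le ha.2 hb.2)
    have h3 : (0:ℝ) ≤ 1 - t^2 := by nlinarith
    have h4 : -1/(1 - t^2) ≤ 0 := div_nonpos_of_nonpos_of_nonneg (by norm_num) h3
    rw [Real.norm_eq_abs, abs_of_pos (Real.exp_pos _)]
    calc Real.exp (-1/(1-t^2)) ≤ Real.exp 0 := Real.exp_le_exp.mpr h4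
    _ = 1 := Real.exp_zero

lemma even_step :
    ∫ t in (-1:ℝ)..1, Real.exp (-1/(1 - t^2))
      = 2 * ∫ t in Set.Ioo (0:ℝ) 1, Real.exp (-1/(1 - t^2)) := by
  have h1 : ∫ t in (-1:ℝ)..0, Real.exp (-1/(1 - t^2))
      = ∫ t in (0:ℝ)..1, Real.exp (-1/(1 - t^2)) := by
    have h := intervalIntegral.integral_comp_neg (a := (0:ℝ)) (b := 1)
      (fun t : ℝ => Real.exp (-1/(1 - t^2)))
    simpa [neg_sq] using h.symm
  rw [← intervalIntegral.integral_add_adjacent_intervals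
      (f_intInt (a := -1) (b := 0) (by constructor <;> norm_num) (by constructor <;> norm_num))
      (f_intInt (a := 0) (b := 1) (by constructor <;> norm_num) (by constructor <;> norm_num)),
    h1, intervalIntegral.integral_of_le (by norm_num : (0:ℝ) ≤ 1),
    MeasureTheory.integral_Ioc_eq_integral_Ioo]
  ring

theorem stmt4 :
    ∫ t in (-1:ℝ)..1, Real.exp (-1/(1 - t^2))
      = (2/Real.exp 1) * ∫ t in Set.Ioi (0:ℝ), Real.exp (-t) * Real.sqrt (t/(t+1)) := by
  rw [even_step, ibp_step, subst_step]
  field_simp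
end

section
/- Let w : ℝ → ℝ be a bounded Borel function, F : ℝ → ℝ continuous, and A < B real numbers. Then sup_{x ∈ (A,B)} w(x)·|F(x)| = sup_{x ∈ (A,B)} M_w(x)·|F(x)|, where M_w(x) := lim_{δ↓0} sup_{y ∈ (x−δ, x+δ)} w(y) is the upper Baire function of w. -/
theorem stmt11 (w : ℝ → ℝ) (hmeas : Measurable w) (hnn : ∀ x, 0 ≤ w x)
    (M : ℝ) (hbd : ∀ x, w x ≤ M)
    (F : ℝ → ℝ) (hF : Continuous F) (A B : ℝ) (hAB : A < B)
    (Mw : ℝ → ℝ)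
    (hMw : ∀ x : ℝ, Mw x = ⨅ δ : {δ : ℝ // 0 < δ}, sSup (w '' Set.Ioo (x - δ.1) (x + δ.1))) :
    sSup ((fun x => w x * |F x|) '' Set.Ioo A B)
      = sSup ((fun x => Mw x * |F x|) '' Set.Ioo A B) := by
  have hM0 : 0 ≤ M := le_trans (hnn 0) (hbd 0)
  -- basic facts about sSup (w '' Ioo (x-δ) (x+δ))
  have hIne : ∀ (x δ : ℝ), 0 < δ → x ∈ Set.Ioo (x - δ) (x + δ) := by
    intro x δ hδ; constructor <;> linarith
  have hbdd : ∀ x δ : ℝ, BddAbove (w '' Set.Ioo (x - δ) (x + δ)) := by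
    intro x δ; exact ⟨M, by rintro _ ⟨y, _, rfl⟩; exact hbd y⟩
  have hle : ∀ (x δ : ℝ), 0 < δ → w x ≤ sSup (w '' Set.Ioo (x - δ) (x + δ)) := by
    intro x δ hδ
    exact le_csSup (hbdd x δ) ⟨x, hIne x δ hδ, rfl⟩
  have hsle : ∀ (x δ : ℝ), 0 < δ → sSup (w '' Set.Ioo (x - δ) (x + δ)) ≤ M := by
    intro x δ hδ
    refine csSup_le ⟨w x, ⟨x, hIne x δ hδ, rfl⟩⟩ ?_
    rintro _ ⟨y, _, rfl⟩; exact hbd y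
  have hbb : ∀ x : ℝ, BddBelow (Set.range fun δ : {δ : ℝ // 0 < δ} =>
      sSup (w '' Set.Ioo (x - δ.1) (x + δ.1))) := by
    intro x
    refine ⟨0, ?_⟩
    rintro _ ⟨δ, rfl⟩
    exact le_trans (hnn x) (hle x δ.1 δ.2)
  have hwMw : ∀ x, w x ≤ Mw x := by
    intro x; rw [hMw]
    exact le_ciInf fun δ => hle x δ.1 δ.2
  have hMwle : ∀ (x δ : ℝ), 0 < δ → Mw x ≤ sSup (w '' Set.Ioo (x - δ) (x + δ)) := by
    intro x δ hδ; rw [hMw]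
    exact ciInf_le (hbb x) ⟨δ, hδ⟩
  have hMwM : ∀ x, Mw x ≤ M := fun x => (hMwle x 1 one_pos).trans (hsle x 1 one_pos)
  -- bound on |F| over [A,B]
  obtain ⟨C, hC⟩ := (isCompact_Icc (a := A) (b := B)).exists_bound_of_continuousOn hF.continuousOn
  have hC' : ∀ x ∈ Set.Ioo A B, |F x| ≤ C := fun x hx =>
    (Real.norm_eq_abs (F x)) ▸ hC x (Set.mem_Icc_of_Ioo hx)
  have hne : (Set.Ioo A B).Nonempty := Set.nonempty_Ioo.2 hAB
  -- boundedness of both image sets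
  have hbddL : BddAbove ((fun x => w x * |F x|) '' Set.Ioo A B) := by
    refine ⟨M * C, ?_⟩
    rintro _ ⟨x, hx, rfl⟩
    exact mul_le_mul (hbd x) (hC' x hx) (abs_nonneg _) hM0
  have hbddR : BddAbove ((fun x => Mw x * |F x|) '' Set.Ioo A B) := by
    refine ⟨M * C, ?_⟩
    rintro _ ⟨x, hx, rfl⟩
    exact mul_le_mul (hMwM x) (hC' x hx) (abs_nonneg _) hM0
  set S := sSup ((fun x => w x * |F x|) '' Set.Ioo A B) with hS
  have hS0 : 0 ≤ S := by
    obtain ⟨x0, hx0⟩ := hne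
    exact le_trans (mul_nonneg (hnn x0) (abs_nonneg _))
      (le_csSup hbddL ⟨x0, hx0, rfl⟩)
  -- key step
  have key : ∀ x ∈ Set.Ioo A B, Mw x * |F x| ≤ S := by
    intro x hx
    refine le_of_forall_pos_le_add ?_
    intro ε hε
    -- continuity of |F ·| at x
    have hcont : Continuous fun y => |F y| := hF.abs
    obtain ⟨δ0, hδ0, hδ0'⟩ := Metric.continuous_iff.mp hcont x (ε / (M + 1))
      (by positivity)
    set δ : ℝ := min δ0 (min (x - A) (B - x)) with hδdef
    have hδpos : 0 < δ := lt_min hδ0 (lt_min (by linarith [hx.1]) (by linarith [hx.2]))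
    have hsub : Set.Ioo (x - δ) (x + δ) ⊆ Set.Ioo A B := by
      intro y hy
      have h1 : δ ≤ x - A := le_trans (min_le_right _ _) (min_le_left _ _)
      have h2 : δ ≤ B - x := le_trans (min_le_right _ _) (min_le_right _ _)
      exact ⟨by linarith [hy.1], by linarith [hy.2]⟩
    have hnear : ∀ y ∈ Set.Ioo (x - δ) (x + δ), abs (|F y| - |F x|) < ε / (M + 1) := by
      intro y hy
      have : dist y x < δ0 := by
        rw [Real.dist_eq]
        have hδle : δ ≤ δ0 := min_le_left _ _
        have := hy.1; have := hy.2
        rw [abs_lt]; constructor <;> linarith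
      have := hδ0' y this
      rwa [Real.dist_eq] at this
    have hclaim : ∀ y ∈ Set.Ioo (x - δ) (x + δ), w y * |F x| ≤ S + ε := by
      intro y hy
      have h1 : w y * |F y| ≤ S := le_csSup hbddL ⟨y, hsub hy, rfl⟩
      have h2 : abs (|F y| - |F x|) < ε / (M + 1) := hnear y hy
      have h3 : |F x| - |F y| < ε / (M + 1) := by
        have := abs_lt.mp h2; linarith [this.1]
      have h4 : w y * (|F x| - |F y|) ≤ ε := by
        rcases le_or_gt (|F x| - |F y|) 0 with h | h
        · exact le_trans (mul_nonpos_of_nonneg_of_nonpos (hnn y) h) hε.le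
        · have h5 : w y * (|F x| - |F y|) ≤ M * (ε / (M + 1)) :=
            mul_le_mul (hbd y) h3.le h.le hM0
          have h6 : M * (ε / (M + 1)) ≤ ε := by
            rw [mul_comm, div_mul_eq_mul_div, div_le_iff₀ (by linarith)]
            nlinarith
          linarith
      nlinarith
    have hsupclaim : sSup (w '' Set.Ioo (x - δ) (x + δ)) * |F x| ≤ S + ε := by
      rcases eq_or_lt_of_le (abs_nonneg (F x)) with hFx | hFx
      · rw [← hFx, mul_zero]; linarith
      · have h5 : sSup (w '' Set.Ioo (x - δ) (x + δ)) ≤ (S + ε) / |F x| := by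
          refine csSup_le ⟨w x, ⟨x, hIne x δ hδpos, rfl⟩⟩ ?_
          rintro _ ⟨y, hy, rfl⟩
          rw [le_div_iff₀ hFx]
          exact hclaim y hy
        calc sSup (w '' Set.Ioo (x - δ) (x + δ)) * |F x|
            ≤ (S + ε) / |F x| * |F x| := by
              exact mul_le_mul_of_nonneg_right h5 (abs_nonneg _)
          _ = S + ε := div_mul_cancel₀ _ (ne_of_gt hFx)
    exact le_trans (mul_le_mul_of_nonneg_right (hMwle x δ hδpos) (abs_nonneg _)) hsupclaim
  refine le_antisymm ?_ ?_
  · refine csSup_le (hne.image _) ?_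
    rintro _ ⟨x, hx, rfl⟩
    exact le_trans (mul_le_mul_of_nonneg_right (hwMw x) (abs_nonneg _))
      (le_csSup hbddR ⟨x, hx, rfl⟩)
  · refine csSup_le (hne.image _) ?_
    rintro _ ⟨x, hx, rfl⟩
    exact key x hx
end
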